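/- Consider the free abelian groups C⁵ with basis {e^{0,5}, e^{1,4}, e^{2,3}, e^{3,2}, e^{4,1}, e^{5,0}}, C⁶ with basis {e^{1,5}, e^{2,4}, e^{3,3}, e^{4,2}, e^{5,1}, e^{6,0}}, and C⁷ with basis {e^{2,5}, e^{3,4}, e^{4,3}, e^{5,2}, e^{6,1}}, and the group homomorphisms δ⁵ : C⁵ → C⁶ determined by δ⁵(e^{2,3}) = 2e^{2,4}, δ⁵(e^{4,1}) = 2e^{4,2}, and δ⁵ = 0 on the other basis elements, and δ⁶ : C⁶ → C⁷ determined by δ⁶(e^{3,3}) = −2e^{3,4}, δ⁶(e^{5,1}) = −2e^{5,2}, and δ⁶ = 0 on the other basis elements. Then δ⁶ ∘ δ⁵ = 0, and the quotient group ker(δ⁶)/im(δ⁵) is isomorphic to ℤ ⊕ ℤ ⊕ ℤ/2 ⊕ ℤ/2. (This cochain complex computes the twisted cohomology H⁶(X₁₁; L) of the manifold X₁₁ = (S⁶ × S⁵)/(ℤ/2 × ℤ/2) with coefficients in the local system L, so H⁶(X₁₁; L) ≅ ℤ² ⊕ (ℤ/2)².) -/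
import Mathlib


/-!
The cochain groups `C⁵`, `C⁶`, `C⁷` are free abelian groups; we realize them as
`Fin 6 → ℤ`, `Fin 6 → ℤ`, `Fin 5 → ℤ`, with the bases ordered as follows:
* `C⁵`: `e^{0,5}, e^{1,4}, e^{2,3}, e^{3,2}, e^{4,1}, e^{5,0}` are `Pi.single 0 1, …, Pi.single 5 1`;
* `C⁶`: `e^{1,5}, e^{2,4}, e^{3,3}, e^{4,2}, e^{5,1}, e^{6,0}` are `Pi.single 0 1, …, Pi.single 5 1`;
* `C⁷`: `e^{2,5}, e^{3,4}, e^{4,3}, e^{5,2}, e^{6,1}` are `Pi.single 0 1, …, Pi.single 4 1`.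
-/

/-- `δ⁵ : C⁵ → C⁶`, determined by `δ⁵(e^{2,3}) = 2e^{2,4}`, `δ⁵(e^{4,1}) = 2e^{4,2}` and
`δ⁵ = 0` on the other basis elements. -/
def delta5 : (Fin 6 → ℤ) →ₗ[ℤ] (Fin 6 → ℤ) where
  toFun v := fun j => if j = 1 then 2 * v 2 else if j = 3 then 2 * v 4 else 0
  map_add' x y := by funext j; simp only [Pi.add_apply]; split_ifs <;> ring
  map_smul' c x := by funext j; simp only [Pi.smul_apply, RingHom.id_apply, smul_eq_mul]
                      split_ifs <;> ring

/-- `δ⁶ : C⁶ → C⁷`, determined by `δ⁶(e^{3,3}) = -2e^{3,4}`, `δ⁶(e^{5,1}) = -2e^{5,2}` and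
`δ⁶ = 0` on the other basis elements. -/
def delta6 : (Fin 6 → ℤ) →ₗ[ℤ] (Fin 5 → ℤ) where
  toFun v := fun j => if j = 1 then -2 * v 2 else if j = 3 then -2 * v 4 else 0
  map_add' x y := by funext j; simp only [Pi.add_apply]; split_ifs <;> ring
  map_smul' c x := by funext j; simp only [Pi.smul_apply, RingHom.id_apply, smul_eq_mul]
                      split_ifs <;> ring

noncomputable def fmap : ↥(LinearMap.ker delta6) →ₗ[ℤ] (ℤ × ℤ × ZMod 2 × ZMod 2) where
  toFun v := (v.1 0, v.1 5, ((v.1 1 : ℤ) : ZMod 2), ((v.1 3 : ℤ) : ZMod 2))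
  map_add' x y := by simp [Prod.ext_iff]
  map_smul' c x := by
    simp [Prod.ext_iff, zsmul_eq_mul, Prod.smul_def]

lemma fmap_surj : Function.Surjective fmap := by
  rintro ⟨a, b, c, d⟩
  refine ⟨⟨![a, (c.val : ℤ), 0, (d.val : ℤ), 0, b], ?_⟩, ?_⟩
  · rw [LinearMap.mem_ker]; funext j; fin_cases j <;> simp [delta6]
  · refine Prod.ext ?_ (Prod.ext ?_ (Prod.ext ?_ ?_)) <;>
      simp [fmap, ZMod.natCast_val, ZMod.intCast_cast, ZMod.cast_id] <;> rfl

lemma fmap_ker : LinearMap.ker fmap =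
    Submodule.comap (LinearMap.ker delta6).subtype (LinearMap.range delta5) := by
  ext ⟨v, hv⟩
  rw [LinearMap.mem_ker] at hv
  have h2 : v 2 = 0 := by
    have := congrFun hv 1
    simpa [delta6] using this
  have h4 : v 4 = 0 := by
    have := congrFun hv 3
    simpa [delta6] using this
  simp only [LinearMap.mem_ker, Submodule.mem_comap, Submodule.subtype_apply,
    LinearMap.mem_range, fmap, LinearMap.coe_mk, AddHom.coe_mk, Prod.mk_eq_zero]
  constructor
  · rintro ⟨h0, h5, h1, h3⟩
    rw [ZMod.intCast_zmod_eq_zero_iff_dvd] at h1 h3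
    obtain ⟨m, hm⟩ := h1
    obtain ⟨n, hn⟩ := h3
    refine ⟨![0, 0, m, 0, n, 0], ?_⟩
    funext j; fin_cases j <;> simp [delta5, h0, h5, h2, h4, hm, hn]
  · rintro ⟨u, hu⟩
    refine ⟨?_, ?_, ?_, ?_⟩
    · have := congrFun hu 0; simp [delta5] at this; omega
    · have := congrFun hu 5; simp [delta5] at this; omega
    · have := congrFun hu 1; simp [delta5] at this
      rw [← this]; exact (ZMod.intCast_zmod_eq_zero_iff_dvd _ 2).2 ⟨u 2, rfl⟩
    · have := congrFun hu 3; simp [delta5] at this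
      rw [← this]; exact (ZMod.intCast_zmod_eq_zero_iff_dvd _ 2).2 ⟨u 4, rfl⟩

/-- The twisted-cohomology cochain complex of `X₁₁ = (S⁶ × S⁵)/(ℤ/2 × ℤ/2)`:
`δ⁵` and `δ⁶` take the stated values on basis elements, `δ⁶ ∘ δ⁵ = 0`, and
`H⁶ = ker δ⁶ / im δ⁵ ≅ ℤ ⊕ ℤ ⊕ ℤ/2 ⊕ ℤ/2`. -/
theorem twisted_cohomology_X11 :
    delta5 (Pi.single 2 1) = (2 : ℤ) • Pi.single 1 1 ∧
    delta5 (Pi.single 4 1) = (2 : ℤ) • Pi.single 3 1 ∧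
    (∀ i : Fin 6, i ≠ 2 → i ≠ 4 → delta5 (Pi.single i 1) = 0) ∧
    delta6 (Pi.single 2 1) = (-2 : ℤ) • Pi.single 1 1 ∧
    delta6 (Pi.single 4 1) = (-2 : ℤ) • Pi.single 3 1 ∧
    (∀ i : Fin 6, i ≠ 2 → i ≠ 4 → delta6 (Pi.single i 1) = 0) ∧
    delta6.comp delta5 = 0 ∧
    Nonempty
      ((↥(LinearMap.ker delta6) ⧸
          Submodule.comap (LinearMap.ker delta6).subtype (LinearMap.range delta5)) ≃+
        (ℤ × ℤ × ZMod 2 × ZMod 2)) := by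
  refine ⟨?_, ?_, ?_, ?_, ?_, ?_, ?_, ?_⟩
  · funext j; fin_cases j <;> simp [delta5, Pi.single_apply]
  · funext j; fin_cases j <;> simp [delta5, Pi.single_apply]
  · intro i h2 h4; funext j; fin_cases j <;>
      simp [delta5, Pi.single_apply, Ne.symm h2, Ne.symm h4]
  · funext j; fin_cases j <;> simp [delta6, Pi.single_apply]
  · funext j; fin_cases j <;> simp [delta6, Pi.single_apply]
  · intro i h2 h4; funext j; fin_cases j <;>
      simp [delta6, Pi.single_apply, Ne.symm h2, Ne.symm h4]
  · apply LinearMap.ext; intro v; funext j; fin_cases j <;> simp [delta5, delta6]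
  · exact ⟨((Submodule.quotEquivOfEq _ _ fmap_ker.symm).trans
      (fmap.quotKerEquivOfSurjective fmap_surj)).toAddEquiv⟩
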